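/- For any ordinal α with Cantor normal form α = ω^γ + δ (δ < ω^{γ+1}), there is a quasi-embedding from B_{α,1} into B_{ω^γ, X} where X := B_{δ,1}; the analogous quasi-embedding exists for B^l in place of B. -/

import Mathlib

universe u

/-- Binary trees with leaf labels in `X` and ordinal inner labels. -/
inductive OTree (X : Type u) where
  | leaf (x : X)
  | node (b : Ordinal.{0}) (l r : OTree X)

/-- The infimum-preserving embeddability relation on such trees, relative to a
comparison relation `leX` on the leaf labels. -/
inductive OTree.Le {X : Type u} (leX : X → X → Prop) : OTree X → OTree X → Prop
  | leaf {x y : X} : leX x y → OTree.Le leX (.leaf x) (.leaf y)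
  | left {s : OTree X} {γ : Ordinal.{0}} {tl tr : OTree X} :
      OTree.Le leX s tl → OTree.Le leX s (.node γ tl tr)
  | right {s : OTree X} {γ : Ordinal.{0}} {tl tr : OTree X} :
      OTree.Le leX s tr → OTree.Le leX s (.node γ tl tr)
  | node {β γ : Ordinal.{0}} {sl sr tl tr : OTree X} :
      β ≤ γ → OTree.Le leX sl tl → OTree.Le leX sr tr →
        OTree.Le leX (.node β sl sr) (.node γ tl tr)

/-- The inner labels of a tree. -/
def OTree.innerLabels {X : Type u} : OTree X → List Ordinal.{0}
  | .leaf _ => []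
  | .node b l r => b :: (l.innerLabels ++ r.innerLabels)

/-- The leaf labels of a tree. -/
def OTree.leafLabels {X : Type u} : OTree X → List X
  | .leaf x => [x]
  | .node _ l r => l.leafLabels ++ r.leafLabels

/-- Weakly ascending inner labels (the trees of `B`). -/
def OTree.IsB {X : Type u} : OTree X → Prop
  | .leaf _ => True
  | .node b l r =>
      (∀ x ∈ l.innerLabels, b ≤ x) ∧ (∀ x ∈ r.innerLabels, b ≤ x) ∧
        l.IsB ∧ r.IsB

/-- Weakly ascending inner labels, ascending strictly on left subtrees (the
trees of `B^l`). -/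
def OTree.IsBl {X : Type u} : OTree X → Prop
  | .leaf _ => True
  | .node b l r =>
      (∀ x ∈ l.innerLabels, b < x) ∧ (∀ x ∈ r.innerLabels, b ≤ x) ∧
        l.IsBl ∧ r.IsBl

/-- All inner labels lie strictly below `a`. -/
def OTree.BoundedBy {X : Type u} (a : Ordinal.{0}) (t : OTree X) : Prop :=
  ∀ x ∈ t.innerLabels, x < a

namespace QE

/-- ordinal subtraction lemmas -/
lemma osub_le_osub {a b : Ordinal.{0}} (c : Ordinal.{0}) (h : a ≤ b) : a - c ≤ b - c := by
  rw [Ordinal.sub_le]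
  exact h.trans (Ordinal.le_add_sub b c)

lemma osub_lt_osub {a b c : Ordinal.{0}} (hc : c ≤ a) (h : a < b) : a - c < b - c := by
  by_contra h'
  push_neg at h'
  rw [Ordinal.sub_le, Ordinal.add_sub_cancel_of_le hc] at h'
  exact absurd h' h.not_ge

lemma le_of_osub_le {a b c : Ordinal.{0}} (hc : c ≤ b) (h : a - c ≤ b - c) : a ≤ b := by
  calc a ≤ c + (a - c) := Ordinal.le_add_sub a c
    _ ≤ c + (b - c) := add_le_add_right h c
    _ = b := Ordinal.add_sub_cancel_of_le hc

lemma osub_lt_of_lt_add {x c δ : Ordinal.{0}} (hc : c ≤ x) (h : x < c + δ) : x - c < δ := by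
  by_contra h'
  push_neg at h'
  have : c + δ ≤ c + (x - c) := add_le_add_right h' c
  rw [Ordinal.add_sub_cancel_of_le hc] at this
  exact absurd this h.not_ge



/-- subtract `c` from every inner label -/
noncomputable def subT (c : Ordinal.{0}) (t : OTree Unit) : OTree Unit :=
  match t with
  | .leaf x => .leaf x
  | .node b l r => .node (b - c) (subT c l) (subT c r)
termination_by structural t

lemma subT_innerLabels (c : Ordinal.{0}) (t : OTree Unit) :
    (subT c t).innerLabels = t.innerLabels.map (· - c) := by
  induction t with
  | leaf x => simp [subT, OTree.innerLabels]
  | node b l r ihl ihr => simp [subT, OTree.innerLabels, ihl, ihr]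

lemma subT_isB (c : Ordinal.{0}) (t : OTree Unit) (h : t.IsB) : (subT c t).IsB := by
  induction t with
  | leaf x => trivial
  | node b l r ihl ihr =>
    obtain ⟨hl, hr, Bl, Br⟩ := h
    refine ⟨?_, ?_, ihl Bl, ihr Br⟩ <;>
      · intro x hx
        rw [subT_innerLabels] at hx
        obtain ⟨y, hy, rfl⟩ := List.mem_map.1 hx
        first
        | exact osub_le_osub c (hl y hy)
        | exact osub_le_osub c (hr y hy)

lemma subT_isBl (c : Ordinal.{0}) (t : OTree Unit)
    (hge : ∀ x ∈ t.innerLabels, c ≤ x) (h : t.IsBl) : (subT c t).IsBl := by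
  induction t with
  | leaf x => trivial
  | node b l r ihl ihr =>
    obtain ⟨hl, hr, Bl, Br⟩ := h
    have hcb : c ≤ b := hge b (by simp [OTree.innerLabels])
    have hgel : ∀ x ∈ l.innerLabels, c ≤ x := fun x hx =>
      hge x (by simp [OTree.innerLabels, hx])
    have hger : ∀ x ∈ r.innerLabels, c ≤ x := fun x hx =>
      hge x (by simp [OTree.innerLabels, hx])
    refine ⟨?_, ?_, ihl hgel Bl, ihr hger Br⟩
    · intro x hx
      rw [subT_innerLabels] at hx
      obtain ⟨y, hy, rfl⟩ := List.mem_map.1 hx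
      exact osub_lt_osub hcb (hl y hy)
    · intro x hx
      rw [subT_innerLabels] at hx
      obtain ⟨y, hy, rfl⟩ := List.mem_map.1 hx
      exact osub_le_osub c (hr y hy)

lemma subT_boundedBy (c δ : Ordinal.{0}) (t : OTree Unit)
    (hge : ∀ x ∈ t.innerLabels, c ≤ x) (hlt : ∀ x ∈ t.innerLabels, x < c + δ) :
    (subT c t).BoundedBy δ := by
  intro x hx
  rw [subT_innerLabels] at hx
  obtain ⟨y, hy, rfl⟩ := List.mem_map.1 hx
  exact osub_lt_of_lt_add (hge y hy) (hlt y hy)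

/-- reflection of `Le` along `subT` -/
lemma subT_reflect (c : Ordinal.{0}) :
    ∀ t s : OTree Unit, (∀ x ∈ s.innerLabels, c ≤ x) → (∀ x ∈ t.innerLabels, c ≤ x) →
      OTree.Le (fun _ _ => True) (subT c s) (subT c t) →
      OTree.Le (fun _ _ => True) s t := by
  intro t
  induction t with
  | leaf y =>
    intro s hs ht h
    cases s with
    | leaf x => exact .leaf trivial
    | node β sl sr => cases h
  | node b l r ihl ihr =>
    intro s hs ht h
    have htl : ∀ x ∈ l.innerLabels, c ≤ x := fun x hx =>
      ht x (by simp [OTree.innerLabels, hx])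
    have htr : ∀ x ∈ r.innerLabels, c ≤ x := fun x hx =>
      ht x (by simp [OTree.innerLabels, hx])
    cases s with
    | leaf x =>
      cases h with
      | left h => exact .left (ihl (.leaf x) hs htl h)
      | right h => exact .right (ihr (.leaf x) hs htr h)
    | node β sl sr =>
      have hsl : ∀ x ∈ sl.innerLabels, c ≤ x := fun x hx =>
        hs x (by simp [OTree.innerLabels, hx])
      have hsr : ∀ x ∈ sr.innerLabels, c ≤ x := fun x hx =>
        hs x (by simp [OTree.innerLabels, hx])
      cases h with
      | left h => exact .left (ihl _ hs htl h)
      | right h => exact .right (ihr _ hs htr h)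
      | node hle h1 h2 =>
        refine .node ?_ (ihl _ hsl htl h1) (ihr _ hsr htr h2)
        exact le_of_osub_le (ht b (by simp [OTree.innerLabels])) hle

/-- the quasi-embedding -/
noncomputable def emb (c : Ordinal.{0}) (t : OTree Unit) : OTree (OTree Unit) :=
  match t with
  | .leaf _ => .leaf (.leaf ())
  | .node b l r =>
      if c ≤ b then .leaf (subT c (.node b l r))
      else .node b (emb c l) (emb c r)
termination_by structural t

lemma emb_innerLabels_subset (c : Ordinal.{0}) (t : OTree Unit) :
    ∀ x ∈ (emb c t).innerLabels, x ∈ t.innerLabels := by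
  induction t with
  | leaf y => intro x hx; simp [emb, OTree.innerLabels] at hx
  | node b l r ihl ihr =>
    intro x hx
    by_cases hc : c ≤ b
    · simp [emb, hc, OTree.innerLabels] at hx
    · simp only [emb, hc, if_false, OTree.innerLabels, List.mem_cons, List.mem_append] at hx ⊢
      rcases hx with rfl | hx | hx
      · exact Or.inl rfl
      · exact Or.inr (Or.inl (ihl x hx))
      · exact Or.inr (Or.inr (ihr x hx))

/-- all inner labels of an `IsB` tree with root `≥ c` are `≥ c` -/
lemma geAll_of_isB {c : Ordinal.{0}} {t : OTree Unit} (h : t.IsB)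
    (hroot : ∀ b l r, t = .node b l r → c ≤ b) :
    ∀ x ∈ t.innerLabels, c ≤ x := by
  cases t with
  | leaf y => intro x hx; simp [OTree.innerLabels] at hx
  | node b l r =>
    obtain ⟨hl, hr, _, _⟩ := h
    have hcb : c ≤ b := hroot b l r rfl
    intro x hx
    simp only [OTree.innerLabels, List.mem_cons, List.mem_append] at hx
    rcases hx with rfl | hx | hx
    · exact hcb
    · exact hcb.trans (hl x hx)
    · exact hcb.trans (hr x hx)

lemma isB_of_isBl {t : OTree Unit} (h : t.IsBl) : t.IsB := by
  induction t with
  | leaf y => trivial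
  | node b l r ihl ihr =>
    obtain ⟨hl, hr, Bl, Br⟩ := h
    exact ⟨fun x hx => (hl x hx).le, hr, ihl Bl, ihr Br⟩

/-- soundness for `B` -/
lemma emb_sound (c δ : Ordinal.{0}) (t : OTree Unit) (hB : t.IsB)
    (hbd : ∀ x ∈ t.innerLabels, x < c + δ) :
    (emb c t).IsB ∧ (emb c t).BoundedBy c ∧
      ∀ u ∈ (emb c t).leafLabels, u.IsB ∧ u.BoundedBy δ := by
  induction t with
  | leaf y =>
    refine ⟨trivial, ?_, ?_⟩
    · intro x hx; simp [emb, OTree.innerLabels] at hx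
    · intro u hu
      simp only [emb, OTree.leafLabels, List.mem_singleton] at hu
      subst hu
      exact ⟨trivial, fun x hx => by simp [OTree.innerLabels] at hx⟩
  | node b l r ihl ihr =>
    obtain ⟨hl, hr, Bl, Br⟩ := hB
    have hbl : ∀ x ∈ l.innerLabels, x < c + δ := fun x hx =>
      hbd x (by simp [OTree.innerLabels, hx])
    have hbr : ∀ x ∈ r.innerLabels, x < c + δ := fun x hx =>
      hbd x (by simp [OTree.innerLabels, hx])
    by_cases hc : c ≤ b
    · have hge : ∀ x ∈ (OTree.node b l r).innerLabels, c ≤ x :=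
        geAll_of_isB ⟨hl, hr, Bl, Br⟩ (by rintro b' l' r' ⟨rfl, rfl, rfl⟩; exact hc)
      refine ⟨by simp [emb, hc, OTree.IsB], ?_, ?_⟩
      · intro x hx; simp [emb, hc, OTree.innerLabels] at hx
      · intro u hu
        simp only [emb, hc, if_true, OTree.leafLabels, List.mem_singleton] at hu
        subst hu
        exact ⟨subT_isB c _ ⟨hl, hr, Bl, Br⟩, subT_boundedBy c δ _ hge hbd⟩
    · obtain ⟨ihl1, ihl2, ihl3⟩ := ihl Bl hbl
      obtain ⟨ihr1, ihr2, ihr3⟩ := ihr Br hbr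
      refine ⟨?_, ?_, ?_⟩
      · simp only [emb, hc, if_false]
        exact ⟨fun x hx => hl x (emb_innerLabels_subset c l x hx),
          fun x hx => hr x (emb_innerLabels_subset c r x hx), ihl1, ihr1⟩
      · intro x hx
        simp only [emb, hc, if_false, OTree.innerLabels, List.mem_cons, List.mem_append] at hx
        rcases hx with rfl | hx | hx
        · exact lt_of_not_ge hc
        · exact ihl2 x hx
        · exact ihr2 x hx
      · intro u hu
        simp only [emb, hc, if_false, OTree.leafLabels, List.mem_append] at hu
        rcases hu with hu | hu
        · exact ihl3 u hu
        · exact ihr3 u hu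

/-- soundness for `B^l` -/
lemma emb_sound_l (c δ : Ordinal.{0}) (t : OTree Unit) (hB : t.IsBl)
    (hbd : ∀ x ∈ t.innerLabels, x < c + δ) :
    (emb c t).IsBl ∧ (emb c t).BoundedBy c ∧
      ∀ u ∈ (emb c t).leafLabels, u.IsBl ∧ u.BoundedBy δ := by
  induction t with
  | leaf y =>
    refine ⟨trivial, ?_, ?_⟩
    · intro x hx; simp [emb, OTree.innerLabels] at hx
    · intro u hu
      simp only [emb, OTree.leafLabels, List.mem_singleton] at hu
      subst hu
      exact ⟨trivial, fun x hx => by simp [OTree.innerLabels] at hx⟩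
  | node b l r ihl ihr =>
    obtain ⟨hl, hr, Bl, Br⟩ := hB
    have hbl : ∀ x ∈ l.innerLabels, x < c + δ := fun x hx =>
      hbd x (by simp [OTree.innerLabels, hx])
    have hbr : ∀ x ∈ r.innerLabels, x < c + δ := fun x hx =>
      hbd x (by simp [OTree.innerLabels, hx])
    by_cases hc : c ≤ b
    · have hge : ∀ x ∈ (OTree.node b l r).innerLabels, c ≤ x :=
        geAll_of_isB (isB_of_isBl ⟨hl, hr, Bl, Br⟩)
          (by rintro b' l' r' ⟨rfl, rfl, rfl⟩; exact hc)
      refine ⟨by simp [emb, hc, OTree.IsBl], ?_, ?_⟩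
      · intro x hx; simp [emb, hc, OTree.innerLabels] at hx
      · intro u hu
        simp only [emb, hc, if_true, OTree.leafLabels, List.mem_singleton] at hu
        subst hu
        exact ⟨subT_isBl c _ hge ⟨hl, hr, Bl, Br⟩, subT_boundedBy c δ _ hge hbd⟩
    · obtain ⟨ihl1, ihl2, ihl3⟩ := ihl Bl hbl
      obtain ⟨ihr1, ihr2, ihr3⟩ := ihr Br hbr
      refine ⟨?_, ?_, ?_⟩
      · simp only [emb, hc, if_false]
        exact ⟨fun x hx => hl x (emb_innerLabels_subset c l x hx),
          fun x hx => hr x (emb_innerLabels_subset c r x hx), ihl1, ihr1⟩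
      · intro x hx
        simp only [emb, hc, if_false, OTree.innerLabels, List.mem_cons, List.mem_append] at hx
        rcases hx with rfl | hx | hx
        · exact lt_of_not_ge hc
        · exact ihl2 x hx
        · exact ihr2 x hx
      · intro u hu
        simp only [emb, hc, if_false, OTree.leafLabels, List.mem_append] at hu
        rcases hu with hu | hu
        · exact ihl3 u hu
        · exact ihr3 u hu

/-- reflection of `Le` along `emb` -/
lemma emb_reflect (c : Ordinal.{0}) :
    ∀ t s : OTree Unit, s.IsB → t.IsB →
      OTree.Le (OTree.Le fun _ _ => True) (emb c s) (emb c t) →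
      OTree.Le (fun _ _ => True) s t := by
  intro t
  induction t with
  | leaf y =>
    intro s hsB _ h
    cases s with
    | leaf x => exact .leaf trivial
    | node β sl sr =>
      by_cases hcβ : c ≤ β
      · have hemb : emb c (OTree.node β sl sr) = .leaf (subT c (.node β sl sr)) := by
          simp [emb, hcβ]
        rw [hemb] at h
        cases h with
        | leaf h => cases h
      · have hemb : emb c (OTree.node β sl sr)
            = .node β (emb c sl) (emb c sr) := by simp [emb, hcβ]
        rw [hemb] at h
        cases h
  | node b tl tr ihl ihr =>
    intro s hsB htB h
    obtain ⟨htl', htr', Btl, Btr⟩ := htB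
    by_cases hcb : c ≤ b
    · have hget : ∀ x ∈ (OTree.node b tl tr).innerLabels, c ≤ x :=
        geAll_of_isB ⟨htl', htr', Btl, Btr⟩ (by intro b' l' r' heq; cases heq; exact hcb)
      have hembt : emb c (OTree.node b tl tr) = .leaf (subT c (.node b tl tr)) := by
        simp [emb, hcb]
      rw [hembt] at h
      cases s with
      | leaf x =>
        cases x
        cases h with
        | leaf h =>
          exact subT_reflect c _ (.leaf ())
            (by intro z hz; simp [OTree.innerLabels] at hz) hget h
      | node β sl sr =>
        by_cases hcβ : c ≤ β
        · have hembs : emb c (OTree.node β sl sr) = .leaf (subT c (.node β sl sr)) := by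
            simp [emb, hcβ]
          rw [hembs] at h
          cases h with
          | leaf h =>
            exact subT_reflect c _ _
              (geAll_of_isB hsB (by intro b' l' r' heq; cases heq; exact hcβ)) hget h
        · have hembs : emb c (OTree.node β sl sr)
              = .node β (emb c sl) (emb c sr) := by simp [emb, hcβ]
          rw [hembs] at h
          cases h
    · have hembt : emb c (OTree.node b tl tr)
          = .node b (emb c tl) (emb c tr) := by simp [emb, hcb]
      rw [hembt] at h
      cases s with
      | leaf x =>
        cases h with
        | left h => exact .left (ihl (.leaf x) trivial Btl h)
        | right h => exact .right (ihr (.leaf x) trivial Btr h)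
      | node β sl sr =>
        obtain ⟨hsl', hsr', Bsl, Bsr⟩ := hsB
        by_cases hcβ : c ≤ β
        · have hembs : emb c (OTree.node β sl sr) = .leaf (subT c (.node β sl sr)) := by
            simp [emb, hcβ]
          rw [hembs] at h
          cases h with
          | left h =>
            exact .left (ihl (.node β sl sr) ⟨hsl', hsr', Bsl, Bsr⟩ Btl
              (by rw [hembs]; exact h))
          | right h =>
            exact .right (ihr (.node β sl sr) ⟨hsl', hsr', Bsl, Bsr⟩ Btr
              (by rw [hembs]; exact h))
        · have hembs : emb c (OTree.node β sl sr)
              = .node β (emb c sl) (emb c sr) := by simp [emb, hcβ]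
          rw [hembs] at h
          cases h with
          | left h =>
            exact .left (ihl (.node β sl sr) ⟨hsl', hsr', Bsl, Bsr⟩ Btl
              (by rw [hembs]; exact h))
          | right h =>
            exact .right (ihr (.node β sl sr) ⟨hsl', hsr', Bsl, Bsr⟩ Btr
              (by rw [hembs]; exact h))
          | node hle h1 h2 =>
            exact .node hle (ihl sl Bsl Btl h1) (ihr sr Bsr Btr h2)

end QE

/-- For `α = ω^γ + δ` in Cantor normal form, there is a quasi-embedding from
`B_{α,1}` into `B_{ω^γ,X}` where `X := B_{δ,1}`, and analogously for `B^l`. -/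
theorem btree_quasiEmbeds_decomposable (γ δ α : Ordinal.{0})
    (hα : α = Ordinal.omega0 ^ γ + δ) (hδ : δ < Ordinal.omega0 ^ (γ + 1)) :
    (∃ f : OTree Unit → OTree (OTree Unit),
      (∀ t : OTree Unit, t.IsB → t.BoundedBy α →
        (f t).IsB ∧ (f t).BoundedBy (Ordinal.omega0 ^ γ) ∧
          ∀ u ∈ (f t).leafLabels, u.IsB ∧ u.BoundedBy δ) ∧
      (∀ s t : OTree Unit, s.IsB → s.BoundedBy α → t.IsB → t.BoundedBy α →
        OTree.Le (OTree.Le fun _ _ => True) (f s) (f t) →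
          OTree.Le (fun _ _ => True) s t)) ∧
    (∃ f : OTree Unit → OTree (OTree Unit),
      (∀ t : OTree Unit, t.IsBl → t.BoundedBy α →
        (f t).IsBl ∧ (f t).BoundedBy (Ordinal.omega0 ^ γ) ∧
          ∀ u ∈ (f t).leafLabels, u.IsBl ∧ u.BoundedBy δ) ∧
      (∀ s t : OTree Unit, s.IsBl → s.BoundedBy α → t.IsBl → t.BoundedBy α →
        OTree.Le (OTree.Le fun _ _ => True) (f s) (f t) →
          OTree.Le (fun _ _ => True) s t)) := by
  subst hα
  constructor
  · exact ⟨QE.emb (Ordinal.omega0 ^ γ),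
      fun t hB hbd => QE.emb_sound _ δ t hB hbd,
      fun s t hsB _ htB _ h => QE.emb_reflect _ t s hsB htB h⟩
  · exact ⟨QE.emb (Ordinal.omega0 ^ γ),
      fun t hB hbd => QE.emb_sound_l _ δ t hB hbd,
      fun s t hsB _ htB _ h =>
        QE.emb_reflect _ t s (QE.isB_of_isBl hsB) (QE.isB_of_isBl htB) h⟩
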